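/- For every k with d ≤ k ≤ n, the lower bound ν_k^C satisfies ν_k^C ≤ z_k ≤ ((n−d+1)/(k−d+1))·ν_k^C. -/

import Mathlib

open Matrix Finset

noncomputable section


/-- The information matrix `∑_{i ∈ S} a_i a_iᵀ + λ I_d`. -/
def infoM (d n : ℕ) (a : Fin n → Fin d → ℝ) (lam : ℝ) (S : Finset (Fin n)) :
    Matrix (Fin d) (Fin d) ℝ :=
  (∑ i ∈ S, Matrix.vecMulVec (a i) (a i)) + lam • (1 : Matrix (Fin d) (Fin d) ℝ)

/-- `f(S) = tr((∑_{i∈S} a_i a_iᵀ + λ I_d)⁻¹)`. -/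
def fS (d n : ℕ) (a : Fin n → Fin d → ℝ) (lam : ℝ) (S : Finset (Fin n)) : ℝ :=
  Matrix.trace (infoM d n a lam S)⁻¹

/-- `z_k = min_{|S| = k} f(S)`. -/
def zk (d n : ℕ) (a : Fin n → Fin d → ℝ) (lam : ℝ) (k : ℕ) : ℝ :=
  sInf {r : ℝ | ∃ S : Finset (Fin n), S.card = k ∧ fS d n a lam S = r}

/-- The matrix `∑_i x_i a_i a_iᵀ + λ I_d` for a fractional vector `x`. -/
def contM (d n : ℕ) (a : Fin n → Fin d → ℝ) (lam : ℝ) (x : Fin n → ℝ) :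
    Matrix (Fin d) (Fin d) ℝ :=
  (∑ i : Fin n, x i • Matrix.vecMulVec (a i) (a i)) + lam • (1 : Matrix (Fin d) (Fin d) ℝ)

/-- The continuous relaxation value `ν_k^C`. -/
def nuC (d n : ℕ) (a : Fin n → Fin d → ℝ) (lam : ℝ) (k : ℕ) : ℝ :=
  sInf {r : ℝ | ∃ x : Fin n → ℝ, (∀ i, 0 ≤ x i ∧ x i ≤ 1) ∧ (∑ i, x i) = (k : ℝ) ∧
    Matrix.trace (contM d n a lam x)⁻¹ = r}

end


section Helpers

open Matrix

variable {d : ℕ}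

lemma aux_trace_vecMulVec (u v : Fin d → ℝ) : Matrix.trace (vecMulVec u v) = u ⬝ᵥ v := by
  simp [Matrix.trace, vecMulVec_apply, dotProduct, Matrix.diag]

lemma aux_vecMulVec_mul (u v : Fin d → ℝ) (A : Matrix (Fin d) (Fin d) ℝ) :
    vecMulVec u v * A = vecMulVec u (Matrix.vecMul v A) := by
  ext i j
  simp [Matrix.mul_apply, vecMulVec_apply, Matrix.vecMul, dotProduct, Finset.mul_sum, mul_assoc]

lemma aux_mul_vecMulVec (u v : Fin d → ℝ) (A : Matrix (Fin d) (Fin d) ℝ) :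
    A * vecMulVec u v = vecMulVec (A *ᵥ u) v := by
  ext i j
  simp only [Matrix.mul_apply, vecMulVec_apply, Matrix.mulVec, dotProduct, Finset.sum_mul]
  exact Finset.sum_congr rfl fun k _ => by ring

lemma aux_vecMulVec_mul_vecMulVec (x y z w : Fin d → ℝ) :
    vecMulVec x y * vecMulVec z w = (y ⬝ᵥ z) • vecMulVec x w := by
  ext i j
  simp only [Matrix.mul_apply, vecMulVec_apply, Matrix.smul_apply, dotProduct, smul_eq_mul,
    Finset.sum_mul, Finset.mul_sum]
  exact Finset.sum_congr rfl fun k _ => by ring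

lemma aux_vecMulVec_mulVec (u w v : Fin d → ℝ) :
    vecMulVec u w *ᵥ v = (w ⬝ᵥ v) • u := by
  ext i
  simp only [Matrix.mulVec, vecMulVec_apply, dotProduct, Pi.smul_apply, smul_eq_mul,
    Finset.sum_mul, Finset.mul_sum]
  exact Finset.sum_congr rfl fun k _ => by ring

lemma aux_posSemidef_vecMulVec_self (u : Fin d → ℝ) : (vecMulVec u u).PosSemidef := by
  refine Matrix.PosSemidef.of_dotProduct_mulVec_nonneg ?_ ?_
  · ext i j; simp [vecMulVec_apply, Matrix.conjTranspose_apply, mul_comm]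
  · intro x
    have : x ⬝ᵥ (vecMulVec u u *ᵥ x) = (u ⬝ᵥ x) ^ 2 := by
      simp only [Matrix.mulVec, vecMulVec_apply, dotProduct, Finset.mul_sum, sq,
        Finset.sum_mul, Finset.mul_sum]
      rw [Finset.sum_comm]
      exact Finset.sum_congr rfl fun i _ => Finset.sum_congr rfl fun j _ => by ring
    simpa [this] using sq_nonneg (u ⬝ᵥ x)

lemma aux_dotProduct_self_nonneg (v : Fin d → ℝ) : 0 ≤ v ⬝ᵥ v :=
  Finset.sum_nonneg fun i _ => mul_self_nonneg _

lemma aux_posSemidef_trace_nonneg {A : Matrix (Fin d) (Fin d) ℝ} (hA : A.PosSemidef) :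
    0 ≤ A.trace := by
  refine Finset.sum_nonneg fun i _ => ?_
  have := hA.dotProduct_mulVec_nonneg (Pi.single i 1)
  simpa [Matrix.mulVec_single, single_dotProduct, Matrix.diag] using this

lemma aux_posDef_trace_pos {A : Matrix (Fin d) (Fin d) ℝ} (hA : A.PosDef) (hd : 0 < d) :
    0 < A.trace := by
  have : Nonempty (Fin d) := ⟨⟨0, hd⟩⟩
  refine Finset.sum_pos (fun i _ => ?_) Finset.univ_nonempty
  have hne : (Pi.single i 1 : Fin d → ℝ) ≠ 0 := by
    intro h
    have := congrFun h i
    simp [Pi.single_eq_same] at this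
  have := hA.dotProduct_mulVec_pos hne
  simpa [Matrix.mulVec_single, single_dotProduct, Matrix.diag] using this

lemma aux_posSemidef_smul {A : Matrix (Fin d) (Fin d) ℝ} (hA : A.PosSemidef) {c : ℝ}
    (hc : 0 ≤ c) : (c • A).PosSemidef := by
  refine Matrix.PosSemidef.of_dotProduct_mulVec_nonneg ?_ ?_
  · show (c • A)ᴴ = c • A
    rw [Matrix.conjTranspose_smul, hA.1]
    simp
  · intro x
    rw [Matrix.smul_mulVec, dotProduct_smul]
    exact mul_nonneg hc (hA.dotProduct_mulVec_nonneg x)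

/-- Sherman-Morrison formula. -/
lemma aux_sherman (M : Matrix (Fin d) (Fin d) ℝ) (hM : M.PosDef) (u : Fin d → ℝ) (c : ℝ)
    (h : 1 + c * (u ⬝ᵥ M⁻¹ *ᵥ u) ≠ 0) :
    (M + c • vecMulVec u u)⁻¹ =
      M⁻¹ - (c / (1 + c * (u ⬝ᵥ M⁻¹ *ᵥ u))) • (M⁻¹ * vecMulVec u u * M⁻¹) := by
  set B := M⁻¹ with hB
  set W := vecMulVec u u with hW
  set s := u ⬝ᵥ B *ᵥ u with hs
  set e := c / (1 + c * s) with he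
  apply Matrix.inv_eq_right_inv
  have hdet : IsUnit M.det := hM.det_pos.ne'.isUnit
  have hMB : M * B = 1 := Matrix.mul_nonsing_inv M hdet
  have hM3 : M * (B * W * B) = W * B := by
    rw [← Matrix.mul_assoc, ← Matrix.mul_assoc, hMB, Matrix.one_mul]
  have hWB : W * B = vecMulVec u (Matrix.vecMul u B) := aux_vecMulVec_mul u u B
  have hdot : (Matrix.vecMul u B) ⬝ᵥ u = s := by
    rw [hs, Matrix.dotProduct_mulVec]
  have hW3 : W * (B * W * B) = s • (W * B) := by
    rw [← Matrix.mul_assoc, ← Matrix.mul_assoc, hWB, aux_vecMulVec_mul_vecMulVec, hdot]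
    simp [Matrix.smul_mul, hWB, aux_vecMulVec_mul]
  have expand : (M + c • W) * (B - e • (B * W * B)) =
      M * B + c • (W * B) - e • (M * (B * W * B)) - (e * c) • (W * (B * W * B)) := by
    simp only [add_mul, mul_sub, smul_mul_assoc, mul_smul_comm, smul_smul, smul_add]
    abel
  rw [expand, hMB, hM3, hW3, smul_smul]
  rw [show e * c * s = c * e * s by ring]
  have hcoef : c - (e + c * e * s) = 0 := by
    rw [he]; field_simp; ring
  have hz : c • (W * B) - (e • (W * B) + (c * e * s) • (W * B)) =
      (0 : Matrix (Fin d) (Fin d) ℝ) := by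
    rw [← add_smul, ← sub_smul, hcoef, zero_smul]
  rw [sub_sub, add_sub_assoc, hz, add_zero]

lemma aux_vecMul_eq_mulVec {B : Matrix (Fin d) (Fin d) ℝ} (hB : B.IsHermitian)
    (u : Fin d → ℝ) : Matrix.vecMul u B = B *ᵥ u := by
  have ht : Bᵀ = B := by
    ext i j
    have := congrFun (congrFun hB i) j
    simpa [Matrix.conjTranspose_apply] using this
  rw [← ht, Matrix.vecMul_transpose, ht]

/-- Trace form of Sherman-Morrison. -/
lemma aux_trace_sherman (M : Matrix (Fin d) (Fin d) ℝ) (hM : M.PosDef) (u : Fin d → ℝ) (c : ℝ)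
    (h : 1 + c * (u ⬝ᵥ M⁻¹ *ᵥ u) ≠ 0) :
    Matrix.trace (M + c • vecMulVec u u)⁻¹ =
      Matrix.trace M⁻¹ -
        (c / (1 + c * (u ⬝ᵥ M⁻¹ *ᵥ u))) * ((M⁻¹ *ᵥ u) ⬝ᵥ (M⁻¹ *ᵥ u)) := by
  rw [aux_sherman M hM u c h, Matrix.trace_sub, Matrix.trace_smul]
  rw [aux_mul_vecMulVec, aux_vecMulVec_mul, aux_trace_vecMulVec,
    aux_vecMul_eq_mulVec hM.inv.isHermitian]
  simp [smul_eq_mul]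

end Helpers

section Main

open Matrix

variable {d n : ℕ} {a : Fin n → Fin d → ℝ} {lam : ℝ}

lemma infoM_posDef (hlam : 0 < lam) (S : Finset (Fin n)) : (infoM d n a lam S).PosDef := by
  unfold infoM
  have h1 : (∑ i ∈ S, vecMulVec (a i) (a i)).PosSemidef :=
    Finset.sum_induction _ _ (fun A B hA hB => hA.add hB) Matrix.PosSemidef.zero
      (fun i _ => aux_posSemidef_vecMulVec_self (a i))
  have h2 : (lam • (1 : Matrix (Fin d) (Fin d) ℝ)).PosDef := by
    rw [Matrix.smul_one_eq_diagonal]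
    exact Matrix.posDef_diagonal_iff.mpr fun i => hlam
  exact Matrix.PosDef.posSemidef_add h1 h2

lemma contM_posDef (hlam : 0 < lam) {x : Fin n → ℝ} (hx : ∀ i, 0 ≤ x i) :
    (contM d n a lam x).PosDef := by
  unfold contM
  have h1 : (∑ i : Fin n, x i • vecMulVec (a i) (a i)).PosSemidef :=
    Finset.sum_induction _ _ (fun A B hA hB => hA.add hB) Matrix.PosSemidef.zero
      (fun i _ => aux_posSemidef_smul (aux_posSemidef_vecMulVec_self (a i)) (hx i))
  have h2 : (lam • (1 : Matrix (Fin d) (Fin d) ℝ)).PosDef := by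
    rw [Matrix.smul_one_eq_diagonal]
    exact Matrix.posDef_diagonal_iff.mpr fun i => hlam
  exact Matrix.PosDef.posSemidef_add h1 h2

lemma fS_nonneg (hlam : 0 < lam) (S : Finset (Fin n)) : 0 ≤ fS d n a lam S :=
  aux_posSemidef_trace_nonneg (infoM_posDef hlam S).inv.posSemidef

lemma infoM_erase (S : Finset (Fin n)) (i : Fin n) (hi : i ∈ S) :
    infoM d n a lam (S.erase i) =
      infoM d n a lam S + (-1 : ℝ) • vecMulVec (a i) (a i) := by
  unfold infoM
  have h := Finset.add_sum_erase S (fun j => vecMulVec (a j) (a j)) hi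
  rw [← h]
  simp only [neg_one_smul]
  abel

/-- Exchange step: one can always remove an element losing only a controlled factor. -/
lemma exchange (hlam : 0 < lam) (hd : 0 < d) (S : Finset (Fin n)) (hS : d < S.card) :
    ∃ i ∈ S, fS d n a lam (S.erase i) ≤
      (((S.card : ℝ) - d + 1) / ((S.card : ℝ) - d)) * fS d n a lam S := by
  set M := infoM d n a lam S with hMdef
  have hM : M.PosDef := infoM_posDef hlam S
  set B := M⁻¹ with hBdef
  have hB : B.PosDef := hM.inv
  set tB := Matrix.trace B with htBdef
  have htB : 0 < tB := aux_posDef_trace_pos hB hd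
  set s : Fin n → ℝ := fun i => a i ⬝ᵥ B *ᵥ a i with hsdef
  set p : Fin n → ℝ := fun i => (B *ᵥ a i) ⬝ᵥ (B *ᵥ a i) with hpdef
  have hdet : IsUnit M.det := hM.det_pos.ne'.isUnit
  have hMB : M * B = 1 := Matrix.mul_nonsing_inv M hdet
  have hBM : B * M = 1 := Matrix.nonsing_inv_mul M hdet
  have hs0 : ∀ i, 0 ≤ s i := fun i => by
    have := hB.posSemidef.dotProduct_mulVec_nonneg (a i); simpa using this
  have hp0 : ∀ i, 0 ≤ p i := fun i => aux_dotProduct_self_nonneg _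
  -- each s i < 1 for i ∈ S
  have hs1 : ∀ i ∈ S, s i < 1 := by
    intro i hi
    by_contra hcon
    push_neg at hcon
    have hN : (infoM d n a lam (S.erase i)).PosDef := infoM_posDef hlam _
    set v := B *ᵥ a i with hvdef
    have hsv : a i ⬝ᵥ v = s i := rfl
    have hvai : v ⬝ᵥ a i = s i := by rw [dotProduct_comm]
    have hvne : v ≠ 0 := by
      intro h0
      rw [h0] at hsv
      simp at hsv
      rw [← hsv] at hcon
      linarith
    have hMv : M *ᵥ v = a i := by
      rw [hvdef, Matrix.mulVec_mulVec, hMB, Matrix.one_mulVec]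
    have hq : v ⬝ᵥ ((infoM d n a lam (S.erase i)) *ᵥ v) = s i * (1 - s i) := by
      rw [infoM_erase S i hi, Matrix.add_mulVec, dotProduct_add, hMv,
        Matrix.smul_mulVec, aux_vecMulVec_mulVec]
      simp only [neg_one_smul, dotProduct_neg, dotProduct_smul, smul_eq_mul]
      rw [hsv, hvai]
      ring
    have h0 : (0:ℝ) < v ⬝ᵥ ((infoM d n a lam (S.erase i)) *ᵥ v) := by
      simpa using hN.dotProduct_mulVec_pos hvne
    rw [hq] at h0
    nlinarith
  -- sum identities
  have hsumW : ∑ j ∈ S, vecMulVec (a j) (a j) = M - lam • (1 : Matrix (Fin d) (Fin d) ℝ) := by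
    rw [hMdef]; unfold infoM; exact (add_sub_cancel_right _ _).symm
  have htr1 : Matrix.trace (1 : Matrix (Fin d) (Fin d) ℝ) = (d : ℝ) := by
    simp [Matrix.trace_one]
  have hsum_s : ∑ i ∈ S, s i = (d : ℝ) - lam * tB := by
    have h1 : ∀ i, s i = Matrix.trace (B * vecMulVec (a i) (a i)) := by
      intro i
      rw [aux_mul_vecMulVec, aux_trace_vecMulVec, dotProduct_comm]
    calc ∑ i ∈ S, s i = ∑ i ∈ S, Matrix.trace (B * vecMulVec (a i) (a i)) := by
          exact Finset.sum_congr rfl fun i _ => h1 i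
      _ = Matrix.trace (B * ∑ i ∈ S, vecMulVec (a i) (a i)) := by
          rw [Matrix.mul_sum, Matrix.trace_sum]
      _ = (d : ℝ) - lam * tB := by
          rw [hsumW, Matrix.mul_sub, hBM, Matrix.mul_smul, Matrix.mul_one, Matrix.trace_sub,
            Matrix.trace_smul, htr1]
          simp [smul_eq_mul]
          exact Or.inl rfl
  have hsum_p : ∑ i ∈ S, p i ≤ tB := by
    have h1 : ∀ i, p i = Matrix.trace (B * vecMulVec (a i) (a i) * B) := by
      intro i
      rw [aux_mul_vecMulVec, aux_vecMulVec_mul, aux_trace_vecMulVec,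
        aux_vecMul_eq_mulVec hB.isHermitian]
    have h2 : ∑ i ∈ S, p i = tB - lam * Matrix.trace (B * B) := by
      calc ∑ i ∈ S, p i = ∑ i ∈ S, Matrix.trace (B * vecMulVec (a i) (a i) * B) :=
            Finset.sum_congr rfl fun i _ => h1 i
        _ = Matrix.trace (B * (∑ i ∈ S, vecMulVec (a i) (a i)) * B) := by
            rw [Matrix.mul_sum, Matrix.sum_mul, Matrix.trace_sum]
        _ = tB - lam * Matrix.trace (B * B) := by
            rw [hsumW, Matrix.mul_sub, hBM, Matrix.mul_smul, Matrix.mul_one, Matrix.sub_mul,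
              Matrix.one_mul, Matrix.smul_mul, Matrix.trace_sub, Matrix.trace_smul]
            simp [smul_eq_mul]
            rfl
    have h3 : 0 ≤ Matrix.trace (B * B) := by
      have : (Bᴴ * B).PosSemidef := Matrix.posSemidef_conjTranspose_mul_self B
      rw [hB.isHermitian] at this
      exact aux_posSemidef_trace_nonneg this
    have := mul_nonneg hlam.le h3
    linarith [h2]
  -- pigeonhole
  have hmd : (d : ℝ) < (S.card : ℝ) := by exact_mod_cast hS
  have hSne : S.Nonempty := Finset.card_pos.mp (lt_of_le_of_lt (Nat.zero_le d) hS)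
  have key : ∃ i ∈ S, p i * ((S.card : ℝ) - d) ≤ tB * (1 - s i) := by
    by_contra hcon
    push_neg at hcon
    have hlt : ∑ i ∈ S, tB * (1 - s i) < ∑ i ∈ S, p i * ((S.card : ℝ) - d) :=
      Finset.sum_lt_sum_of_nonempty hSne fun i hi => hcon i hi
    have hL : ∑ i ∈ S, tB * (1 - s i) = tB * ((S.card : ℝ) - d + lam * tB) := by
      rw [← Finset.mul_sum, Finset.sum_sub_distrib, hsum_s, Finset.sum_const,
        nsmul_eq_mul, mul_one]
      ring
    have hR : ∑ i ∈ S, p i * ((S.card : ℝ) - d) = (∑ i ∈ S, p i) * ((S.card : ℝ) - d) := by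
      rw [Finset.sum_mul]
    rw [hL, hR] at hlt
    nlinarith [mul_nonneg hlam.le htB.le]
  obtain ⟨i, hi, hkey⟩ := key
  have hsilt : s i < 1 := hs1 i hi
  have h1s : 0 < 1 - s i := by linarith
  -- trace after removal
  have hne : 1 + (-1 : ℝ) * (a i ⬝ᵥ M⁻¹ *ᵥ a i) ≠ 0 := by
    have : a i ⬝ᵥ M⁻¹ *ᵥ a i = s i := rfl
    rw [this]; intro h; rw [show 1 + -1 * s i = 1 - s i by ring] at h; linarith
  have htrace : fS d n a lam (S.erase i) = tB + (1 / (1 - s i)) * p i := by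
    unfold fS
    rw [infoM_erase S i hi]
    rw [aux_trace_sherman M hM (a i) (-1) hne]
    have hsi : a i ⬝ᵥ M⁻¹ *ᵥ a i = s i := rfl
    have hpi : (M⁻¹ *ᵥ a i) ⬝ᵥ (M⁻¹ *ᵥ a i) = p i := rfl
    rw [hsi, hpi, ← htBdef]
    have : (-1 : ℝ) / (1 + -1 * s i) = -(1 / (1 - s i)) := by
      rw [show 1 + -1 * s i = 1 - s i by ring]
      field_simp
    rw [this]
    ring
  refine ⟨i, hi, ?_⟩
  have hfS : fS d n a lam S = tB := rfl
  rw [htrace, hfS]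
  have hbound : (1 / (1 - s i)) * p i ≤ tB / ((S.card : ℝ) - d) := by
    rw [one_div, inv_mul_eq_div,
      div_le_div_iff₀ h1s (by linarith : (0:ℝ) < (S.card : ℝ) - d)]
    linarith [hkey]
  have heq : (((S.card : ℝ) - d + 1) / ((S.card : ℝ) - d)) * tB
      = tB + tB / ((S.card : ℝ) - d) := by
    have h0 : ((S.card : ℝ) - d) ≠ 0 := by linarith
    field_simp
  rw [heq]
  linarith

/-- Monotonicity: adding nonnegative rank-one terms decreases the trace of the inverse. -/
lemma trace_inv_add_le (hlam : 0 < lam) (M : Matrix (Fin d) (Fin d) ℝ) (hM : M.PosDef)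
    (t : Fin n → ℝ) (ht : ∀ i, 0 ≤ t i) (T : Finset (Fin n)) :
    (M + ∑ i ∈ T, t i • vecMulVec (a i) (a i)).PosDef ∧
      Matrix.trace (M + ∑ i ∈ T, t i • vecMulVec (a i) (a i))⁻¹ ≤ Matrix.trace M⁻¹ := by
  classical
  induction T using Finset.induction with
  | empty => simp only [Finset.sum_empty, add_zero]; exact ⟨hM, le_rfl⟩
  | insert _ _ hni ih =>
    rename_i j T'
    obtain ⟨ihPD, ihle⟩ := ih
    rw [Finset.sum_insert hni]
    set M' := M + ∑ i ∈ T', t i • vecMulVec (a i) (a i) with hM'def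
    have hrw : M + (t j • vecMulVec (a j) (a j) + ∑ i ∈ T', t i • vecMulVec (a i) (a i))
        = M' + t j • vecMulVec (a j) (a j) := by rw [hM'def]; abel
    rw [hrw]
    have hsj : 0 ≤ a j ⬝ᵥ M'⁻¹ *ᵥ a j := by
      have := ihPD.inv.posSemidef.dotProduct_mulVec_nonneg (a j); simpa using this
    have hden : (0:ℝ) < 1 + t j * (a j ⬝ᵥ M'⁻¹ *ᵥ a j) := by
      have := mul_nonneg (ht j) hsj; linarith
    constructor
    · exact ihPD.add_posSemidef (aux_posSemidef_smul (aux_posSemidef_vecMulVec_self (a j)) (ht j))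
    · rw [aux_trace_sherman M' ihPD (a j) (t j) hden.ne']
      have hterm : 0 ≤ (t j / (1 + t j * (a j ⬝ᵥ M'⁻¹ *ᵥ a j))) *
          ((M'⁻¹ *ᵥ a j) ⬝ᵥ (M'⁻¹ *ᵥ a j)) :=
        mul_nonneg (div_nonneg (ht j) hden.le) (aux_dotProduct_self_nonneg _)
      linarith

/-- fS of the full set lower-bounds the continuous relaxation objective. -/
lemma fS_univ_le (hlam : 0 < lam) {x : Fin n → ℝ} (hx : ∀ i, 0 ≤ x i ∧ x i ≤ 1) :
    fS d n a lam Finset.univ ≤ Matrix.trace (contM d n a lam x)⁻¹ := by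
  have hPD : (contM d n a lam x).PosDef := contM_posDef hlam (fun i => (hx i).1)
  have ht : ∀ i, 0 ≤ 1 - x i := fun i => by linarith [(hx i).2]
  have hsum : contM d n a lam x + ∑ i ∈ Finset.univ, (1 - x i) • vecMulVec (a i) (a i)
      = infoM d n a lam Finset.univ := by
    unfold contM infoM
    rw [add_right_comm, ← Finset.sum_add_distrib]
    congr 1
    refine Finset.sum_congr rfl fun i _ => ?_
    rw [← add_smul, show x i + (1 - x i) = 1 by ring, one_smul]
  have := (trace_inv_add_le (a := a) hlam (contM d n a lam x) hPD (fun i => 1 - x i) ht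
    Finset.univ).2
  rw [hsum] at this
  unfold fS
  exact this

/-- The descent: from the full set down to cardinality n - j. -/
lemma descend (hlam : 0 < lam) (hd : 0 < d) (hdn : d ≤ n) {k : ℕ} (hdk : d ≤ k) (hkn : k ≤ n) :
    ∀ j : ℕ, j ≤ n - k → ∃ S : Finset (Fin n), S.card = n - j ∧
      fS d n a lam S ≤ (((n : ℝ) - d + 1) / (((n : ℝ) - j) - d + 1)) *
        fS d n a lam (Finset.univ : Finset (Fin n)) := by
  intro j
  induction j with
  | zero =>
    intro _
    refine ⟨Finset.univ, by simp, ?_⟩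
    have hpos : (0:ℝ) < (n : ℝ) - d + 1 := by
      have : (d : ℝ) ≤ (n : ℝ) := by exact_mod_cast hdn
      linarith
    have heq : ((n : ℝ) - ((0:ℕ):ℝ)) - d + 1 = (n : ℝ) - d + 1 := by push_cast; ring
    rw [heq, div_self hpos.ne', one_mul]
  | succ j ih =>
    intro hj
    have hj' : j ≤ n - k := le_of_lt (Nat.lt_of_succ_le hj)
    obtain ⟨S, hcard, hbound⟩ := ih hj'
    -- card S = n - j > k ≥ d
    have hjk : j + 1 ≤ n - k := hj
    have hklt : k < n - j := by omega
    have hdlt : d < S.card := by omega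
    obtain ⟨i, hi, hex⟩ := exchange hlam hd S hdlt
    refine ⟨S.erase i, ?_, ?_⟩
    · rw [Finset.card_erase_of_mem hi, hcard]; omega
    · have hcastc : ((S.card : ℝ)) = (n : ℝ) - j := by
        rw [hcard]
        have hjn : j ≤ n := by omega
        push_cast [Nat.cast_sub hjn]
        ring
      rw [hcastc] at hex
      set A : ℝ := (n : ℝ) - j with hAdef
      have hkA : (k : ℝ) + 1 ≤ A := by
        rw [hAdef]
        have h1 : ((n - j : ℕ) : ℝ) = (n:ℝ) - j := by
          have hjn : j ≤ n := by omega
          push_cast [Nat.cast_sub hjn]; ring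
        rw [← h1]
        exact_mod_cast hklt
      have hdk' : (d : ℝ) ≤ (k : ℝ) := by exact_mod_cast hdk
      have hAd : (0:ℝ) < A - d := by linarith
      have hAd1 : (0:ℝ) < A - d + 1 := by linarith
      have hfnonneg : 0 ≤ fS d n a lam (Finset.univ : Finset (Fin n)) := fS_nonneg hlam _
      have hc1 : (0:ℝ) ≤ (A - d + 1) / (A - d) := le_of_lt (div_pos hAd1 hAd)
      calc fS d n a lam (S.erase i) ≤ ((A - d + 1) / (A - d)) * fS d n a lam S := hex
        _ ≤ ((A - d + 1) / (A - d)) *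
            ((((n : ℝ) - d + 1) / (A - d + 1)) * fS d n a lam Finset.univ) := by
            exact mul_le_mul_of_nonneg_left hbound hc1
        _ = (((n : ℝ) - d + 1) / (((n : ℝ) - (j+1 : ℕ)) - d + 1)) *
            fS d n a lam Finset.univ := by
            have hcast : ((j+1 : ℕ) : ℝ) = (j:ℝ) + 1 := by push_cast; ring
            rw [hcast]
            have : (n:ℝ) - ((j:ℝ)+1) - d + 1 = A - d := by rw [hAdef]; ring
            rw [this]
            field_simp

theorem stmt4 (d n : ℕ) (hd : 1 ≤ d) (hdn : d ≤ n)
    (a : Fin n → Fin d → ℝ) (lam : ℝ) (hlam : 0 < lam)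
    (k : ℕ) (hdk : d ≤ k) (hkn : k ≤ n) :
    nuC d n a lam k ≤ zk d n a lam k ∧
    zk d n a lam k ≤ (((n : ℝ) - d + 1) / ((k : ℝ) - d + 1)) * nuC d n a lam k := by
  classical
  -- the discrete feasible set
  set ZS := {r : ℝ | ∃ S : Finset (Fin n), S.card = k ∧ fS d n a lam S = r} with hZS
  set NS := {r : ℝ | ∃ x : Fin n → ℝ, (∀ i, 0 ≤ x i ∧ x i ≤ 1) ∧ (∑ i, x i) = (k : ℝ) ∧
    Matrix.trace (contM d n a lam x)⁻¹ = r} with hNS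
  have hZS_ne : ZS.Nonempty := by
    obtain ⟨S, _, hScard⟩ := Finset.exists_subset_card_eq
      (show k ≤ (Finset.univ : Finset (Fin n)).card by simpa using hkn)
    exact ⟨fS d n a lam S, S, hScard, rfl⟩
  have hNS_bdd : BddBelow NS := by
    refine ⟨0, fun r hr => ?_⟩
    obtain ⟨x, hx, _, hxr⟩ := hr
    rw [← hxr]
    exact aux_posSemidef_trace_nonneg (contM_posDef hlam (fun i => (hx i).1)).inv.posSemidef
  have hZS_bdd : BddBelow ZS := by
    refine ⟨0, fun r hr => ?_⟩
    obtain ⟨S, _, hSr⟩ := hr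
    rw [← hSr]
    exact fS_nonneg hlam S
  -- every discrete point is a continuous point
  have hsub : ZS ⊆ NS := by
    rintro r ⟨S, hScard, rfl⟩
    refine ⟨fun i => if i ∈ S then 1 else 0,
      fun i => by by_cases h : i ∈ S <;> simp [h], ?_, ?_⟩
    · rw [Finset.sum_ite_mem]
      simp [Finset.univ_inter, hScard]
    · congr 1
      unfold contM infoM
      congr 1
      rw [show (∑ i : Fin n, (if i ∈ S then (1:ℝ) else 0) • vecMulVec (a i) (a i))
          = ∑ i : Fin n, (if i ∈ S then vecMulVec (a i) (a i) else 0) from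
        Finset.sum_congr rfl fun i _ => by split <;> simp]
      rw [Finset.sum_ite_mem, Finset.univ_inter]
  have part1 : nuC d n a lam k ≤ zk d n a lam k := by
    apply le_csInf hZS_ne
    intro r hr
    exact csInf_le hNS_bdd (hsub hr)
  refine ⟨part1, ?_⟩
  -- part 2
  have hd0 : 0 < d := hd
  obtain ⟨S, hScard, hSbound⟩ := descend hlam hd0 hdn hdk hkn (n - k) (le_refl _)
  have hScard' : S.card = k := by omega
  have hcast : ((n : ℝ) - ((n - k : ℕ) : ℝ)) = (k : ℝ) := by
    push_cast [Nat.cast_sub hkn]; ring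
  rw [hcast] at hSbound
  have hz_le : zk d n a lam k ≤ fS d n a lam S := csInf_le hZS_bdd ⟨S, hScard', rfl⟩
  have hnu_ge : fS d n a lam (Finset.univ : Finset (Fin n)) ≤ nuC d n a lam k := by
    apply le_csInf (hZS_ne.mono hsub)
    rintro r ⟨x, hx, _, rfl⟩
    exact fS_univ_le hlam hx
  have hcoef : (0:ℝ) ≤ ((n : ℝ) - d + 1) / ((k : ℝ) - d + 1) := by
    have h1 : (d:ℝ) ≤ (n:ℝ) := by exact_mod_cast hdn
    have h2 : (d:ℝ) ≤ (k:ℝ) := by exact_mod_cast hdk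
    apply div_nonneg <;> linarith
  calc zk d n a lam k ≤ fS d n a lam S := hz_le
    _ ≤ (((n : ℝ) - d + 1) / ((k : ℝ) - d + 1)) * fS d n a lam Finset.univ := hSbound
    _ ≤ (((n : ℝ) - d + 1) / ((k : ℝ) - d + 1)) * nuC d n a lam k :=
        mul_le_mul_of_nonneg_left hnu_ge hcoef

end Main
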